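/- Consider the noiseless state-evolution recursion (σ_w² = 0). If δ > 2, then there exist constants ε₁ > 0 and ε₂ > 0 such that for every real initialization α₀ ∈ (1 − ε₁, 1) and σ₀² ∈ (0, ε₂), the state-evolution sequences converge to the fixed point (1, 0), i.e., α_t → 1 and σ_t² → 0 as t → ∞. -/

import Mathlib

open MeasureTheory Real Filter Topology

/-- First state-evolution map `ψ₁(α, σ²)`: the phase factor `e^{i θ_α}` times the
real integral `∫_0^{π/2} |α| sin²θ / (|α|² sin²θ + σ²)^{1/2} dθ`. -/
noncomputable def psi1 (α : ℂ) (s : ℝ) : ℂ :=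
  Complex.exp (α.arg * Complex.I) *
    ((∫ θ in (0:ℝ)..(π / 2),
        ‖α‖ * Real.sin θ ^ 2 /
          Real.sqrt (‖α‖ ^ 2 * Real.sin θ ^ 2 + s) : ℝ) : ℂ)

/-- Second state-evolution map `ψ₂(α, σ²; δ, σ_w²)`. -/
noncomputable def psi2 (α : ℂ) (s δ sw : ℝ) : ℝ :=
  4 / δ * (‖α‖ ^ 2 + s + 1)
    - 4 / δ * ∫ θ in (0:ℝ)..(π / 2),
        (2 * ‖α‖ ^ 2 * Real.sin θ ^ 2 + s) /
          Real.sqrt (‖α‖ ^ 2 * Real.sin θ ^ 2 + s)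
    + 4 * sw

/-- State-evolution sequences `(α_t, σ_t²)` with parameters `δ, σ_w²` and
initialization `(α₀, σ₀²)`. -/
noncomputable def SE (δ sw : ℝ) (α0 : ℂ) (s0 : ℝ) : ℕ → ℂ × ℝ
  | 0 => (α0, s0)
  | t + 1 =>
      (psi1 (SE δ sw α0 s0 t).1 (SE δ sw α0 s0 t).2,
       psi2 (SE δ sw α0 s0 t).1 (SE δ sw α0 s0 t).2 δ sw)

noncomputable def f1 (a s : ℝ) : ℝ :=
  ∫ θ in (0:ℝ)..(π/2), a * Real.sin θ ^ 2 / Real.sqrt (a^2 * Real.sin θ^2 + s)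

noncomputable def f2 (a s δ : ℝ) : ℝ :=
  4/δ * (a^2 + s + 1) - 4/δ * ∫ θ in (0:ℝ)..(π/2),
    (2*a^2*Real.sin θ^2 + s) / Real.sqrt (a^2*Real.sin θ^2 + s)

lemma psi1_eq (a s : ℝ) (ha : 0 ≤ a) : psi1 (a:ℂ) s = ((f1 a s : ℝ) : ℂ) := by
  unfold psi1 f1
  rw [Complex.arg_ofReal_of_nonneg ha]
  simp [Real.norm_eq_abs, abs_of_nonneg ha]

lemma psi2_eq (a s δ : ℝ) (ha : 0 ≤ a) : psi2 (a:ℂ) s δ 0 = f2 a s δ := by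
  unfold psi2 f2
  simp [Real.norm_eq_abs, abs_of_nonneg ha]

-- D positive
lemma Dpos (a s θ : ℝ) (hs : 0 < s) : 0 < Real.sqrt (a^2 * Real.sin θ^2 + s) :=
  Real.sqrt_pos.mpr (by positivity)

lemma DposB (b s θ : ℝ) (hs : 0 < s) : 0 < Real.sqrt (b^2 * θ^2 + s) :=
  Real.sqrt_pos.mpr (by positivity)

lemma contD (a s : ℝ) : Continuous fun θ => Real.sqrt (a^2 * Real.sin θ^2 + s) :=
  Real.continuous_sqrt.comp (by continuity)

lemma contDB (b s : ℝ) : Continuous fun θ => Real.sqrt (b^2 * θ^2 + s) :=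
  Real.continuous_sqrt.comp (by continuity)

-- D + a sin θ > 0 everywhere
lemma Dm_pos (a s θ : ℝ) (hs : 0 < s) : 0 < Real.sqrt (a^2 * Real.sin θ^2 + s) + a * Real.sin θ := by
  have h1 : |a * Real.sin θ| < Real.sqrt (a^2 * Real.sin θ^2 + s) := by
    rw [← Real.sqrt_sq_eq_abs]
    apply Real.sqrt_lt_sqrt (sq_nonneg _); nlinarith
  have := neg_abs_le (a * Real.sin θ)
  linarith

lemma DmB_pos (b s θ : ℝ) (hs : 0 < s) : 0 < Real.sqrt (b^2 * θ^2 + s) + b * θ := by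
  have h1 : |b * θ| < Real.sqrt (b^2 * θ^2 + s) := by
    rw [← Real.sqrt_sq_eq_abs]
    apply Real.sqrt_lt_sqrt (sq_nonneg _); nlinarith
  have := neg_abs_le (b * θ)
  linarith

-- the reference integrand with sin replaced by identity
noncomputable def gB (b s θ : ℝ) : ℝ :=
  s^2 / (Real.sqrt (b^2*θ^2+s) * (Real.sqrt (b^2*θ^2+s) + b*θ)^2)

lemma contgB (b s : ℝ) (hs : 0 < s) : Continuous (gB b s) := by
  unfold gB
  apply continuous_const.div
  · exact (contDB b s).mul (((contDB b s).add (by continuity)).pow 2)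
  · intro θ
    have h1 := DposB b s θ hs
    have h2 := DmB_pos b s θ hs
    positivity

-- FTC: closed form for ∫ gB
lemma gB_integral (b s T : ℝ) (hb : 0 < b) (hs : 0 < s) :
    ∫ θ in (0:ℝ)..T, gB b s θ
      = s/(2*b) - s^2/(2*b) * ((Real.sqrt (b^2*T^2+s) + b*T)^2)⁻¹ := by
  have key : ∀ θ ∈ Set.uIcc (0:ℝ) T,
      HasDerivAt (fun x => -(s^2/(2*b)) * ((Real.sqrt (b^2*x^2+s) + b*x)^2)⁻¹) (gB b s θ) θ := by
    intro θ _
    have hDpos := DposB b s θ hs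
    have hDm := DmB_pos b s θ hs
    have h1 : HasDerivAt (fun x : ℝ => b^2*x^2+s) (2*b^2*θ) θ := by
      have := ((hasDerivAt_pow 2 θ).const_mul (b^2)).add_const s
      exact this.congr_deriv (by ring)
    have h2 : HasDerivAt (fun x : ℝ => Real.sqrt (b^2*x^2+s))
        (2*b^2*θ / (2 * Real.sqrt (b^2*θ^2+s))) θ := h1.sqrt (by positivity)
    have h3 : HasDerivAt (fun x : ℝ => Real.sqrt (b^2*x^2+s) + b*x)
        (2*b^2*θ / (2 * Real.sqrt (b^2*θ^2+s)) + b) θ := by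
      simpa using h2.fun_add ((hasDerivAt_id θ).const_mul b)
    have h4 : HasDerivAt (fun x : ℝ => (Real.sqrt (b^2*x^2+s) + b*x)^2)
        (2 * (Real.sqrt (b^2*θ^2+s) + b*θ)^1 * (2*b^2*θ / (2 * Real.sqrt (b^2*θ^2+s)) + b)) θ := by
      simpa using h3.fun_pow 2
    have h5 := (h4.inv (by positivity)).const_mul (-(s^2/(2*b)))
    refine h5.congr_deriv ?_; symm
    have hE2 : Real.sqrt (b^2*θ^2+s) ^ 2 = b^2*θ^2+s := Real.sq_sqrt (by positivity)
    unfold gB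
    set E := Real.sqrt (b^2*θ^2+s) with hE
    field_simp
    ring_nf
  rw [intervalIntegral.integral_eq_sub_of_hasDerivAt key ((contgB b s hs).intervalIntegrable 0 T)]
  have h0 : Real.sqrt (b^2*0^2+s) = Real.sqrt s := by norm_num
  rw [h0]
  have : ((Real.sqrt s + b*0)^2)⁻¹ = s⁻¹ := by
    rw [mul_zero, add_zero, Real.sq_sqrt hs.le]
  rw [this]
  field_simp
  ring

lemma alg_id (E m s : ℝ) (hE : 0 < E) (hEm : 0 < E + m) (h2 : E^2 = m^2 + s) :
    (2*m^2+s)/E = 2*m + s^2/(E*(E+m)^2) := by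
  have hs' : s = E^2 - m^2 := by linarith
  subst hs'
  have h3 : (E^2 - m^2)^2 = (E-m)^2 * (E+m)^2 := by ring
  field_simp
  ring

noncomputable def Kfun (a s θ : ℝ) : ℝ :=
  s^2 / (Real.sqrt (a^2*Real.sin θ^2+s) * (Real.sqrt (a^2*Real.sin θ^2+s) + a*Real.sin θ)^2)

lemma contKfun (a s : ℝ) (hs : 0 < s) : Continuous (Kfun a s) := by
  unfold Kfun
  apply continuous_const.div
  · exact (contD a s).mul (((contD a s).add (by continuity)).pow 2)
  · intro θ
    have h1 := Dpos a s θ hs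
    have h2 := Dm_pos a s θ hs
    positivity

lemma sin_integral_pi_div_two : ∫ θ in (0:ℝ)..(π/2), Real.sin θ = 1 := by
  rw [integral_sin]; simp

lemma I2_split (a s : ℝ) (ha : 0 ≤ a) (hs : 0 < s) :
    ∫ θ in (0:ℝ)..(π/2), (2*a^2*Real.sin θ^2 + s) / Real.sqrt (a^2*Real.sin θ^2 + s)
      = 2*a + ∫ θ in (0:ℝ)..(π/2), Kfun a s θ := by
  have hpt : Set.EqOn (fun θ => (2*a^2*Real.sin θ^2 + s) / Real.sqrt (a^2*Real.sin θ^2 + s))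
      (fun θ => 2*(a*Real.sin θ) + Kfun a s θ) (Set.uIcc (0:ℝ) (π/2)) := by
    intro θ _
    have hE := Dpos a s θ hs
    have hEm := Dm_pos a s θ hs
    have h2 : Real.sqrt (a^2*Real.sin θ^2+s) ^ 2 = (a*Real.sin θ)^2 + s := by
      rw [Real.sq_sqrt (by positivity)]; ring
    have := alg_id (Real.sqrt (a^2*Real.sin θ^2+s)) (a*Real.sin θ) s hE hEm h2
    simp only [Kfun]
    convert this using 2 <;> ring
  rw [intervalIntegral.integral_congr hpt]
  have hi1 : IntervalIntegrable (fun θ => 2*(a*Real.sin θ)) volume 0 (π/2) :=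
    (by continuity : Continuous fun θ => 2*(a*Real.sin θ)).intervalIntegrable 0 (π/2)
  have hi2 : IntervalIntegrable (Kfun a s) volume 0 (π/2) :=
    (contKfun a s hs).intervalIntegrable 0 (π/2)
  rw [intervalIntegral.integral_add hi1 hi2]
  have : ∫ θ in (0:ℝ)..(π/2), 2*(a*Real.sin θ) = 2*a := by
    rw [show (fun θ => 2*(a*Real.sin θ)) = fun θ => (2*a) * Real.sin θ by funext θ; ring]
    rw [intervalIntegral.integral_const_mul, sin_integral_pi_div_two]; ring
  rw [this]
lemma pi_lb : (3.14:ℝ) < π := by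
  have := Real.pi_gt_d6; linarith

lemma pi_ub : π < (3.15:ℝ) := Real.pi_lt_d2

lemma Kfun_ge (a s θ : ℝ) (ha : 0 ≤ a) (hs : 0 < s) (hθ0 : 0 ≤ θ) (hθ1 : θ ≤ π/2) :
    gB a s θ ≤ Kfun a s θ := by
  have hsin_le : Real.sin θ ≤ θ := Real.sin_le hθ0
  have hsin0 : 0 ≤ Real.sin θ := Real.sin_nonneg_of_nonneg_of_le_pi hθ0 (by linarith [Real.pi_pos])
  have hm : a * Real.sin θ ≤ a * θ := by
    rcases eq_or_lt_of_le ha with h|h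
    · simp [← h]
    · exact (mul_le_mul_iff_right₀ h).mpr hsin_le
  have hm2 : a^2 * Real.sin θ^2 ≤ a^2 * θ^2 := by
    nlinarith [mul_le_mul hsin_le hsin_le hsin0 hθ0, sq_nonneg a]
  have hD : Real.sqrt (a^2*Real.sin θ^2+s) ≤ Real.sqrt (a^2*θ^2+s) :=
    Real.sqrt_le_sqrt (by linarith)
  have h1 := Dpos a s θ hs
  have h2 := Dm_pos a s θ hs
  have h3 := DposB a s θ hs
  have h4 := DmB_pos a s θ hs
  unfold gB Kfun
  apply div_le_div_of_nonneg_left (by positivity) (by positivity)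
  have hsum : Real.sqrt (a^2*Real.sin θ^2+s) + a*Real.sin θ ≤ Real.sqrt (a^2*θ^2+s) + a*θ := by
    linarith
  exact mul_le_mul hD (pow_le_pow_left₀ h2.le hsum 2) (by positivity) h3.le

lemma Kfun_le (a s θ : ℝ) (ha : 0 ≤ a) (hs : 0 < s) (hθ0 : 0 ≤ θ) (hθ1 : θ ≤ π/2) :
    Kfun a s θ ≤ gB (2*a/π) s θ := by
  set b := 2*a/π with hb
  have hπ := Real.pi_pos
  have hbθ : b * θ ≤ a * Real.sin θ := by
    have h := Real.mul_le_sin hθ0 hθ1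
    have : b * θ = a * (2/π * θ) := by rw [hb]; ring
    rw [this]
    rcases eq_or_lt_of_le ha with h'|h'
    · simp [← h']
    · exact (mul_le_mul_iff_right₀ h').mpr h
  have hbθ0 : 0 ≤ b * θ := by positivity
  have hm2 : b^2 * θ^2 ≤ a^2 * Real.sin θ^2 := by nlinarith
  have hD : Real.sqrt (b^2*θ^2+s) ≤ Real.sqrt (a^2*Real.sin θ^2+s) :=
    Real.sqrt_le_sqrt (by linarith)
  have h1 := Dpos a s θ hs
  have h2 := Dm_pos a s θ hs
  have h3 := DposB b s θ hs
  have h4 := DmB_pos b s θ hs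
  unfold gB Kfun
  apply div_le_div_of_nonneg_left (by positivity) (by positivity)
  have hsum : Real.sqrt (b^2*θ^2+s) + b*θ ≤ Real.sqrt (a^2*Real.sin θ^2+s) + a*Real.sin θ := by
    linarith
  exact mul_le_mul hD (pow_le_pow_left₀ h4.le hsum 2) (by positivity) h1.le

lemma K_lower (a s : ℝ) (ha : 0.9 ≤ a) (ha1 : a ≤ 1) (hs : 0 < s) :
    s/2 - s^2/2 ≤ ∫ θ in (0:ℝ)..(π/2), Kfun a s θ := by
  have ha0 : (0:ℝ) < a := by linarith
  have hπ := Real.pi_pos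
  have hmono : ∫ θ in (0:ℝ)..(π/2), gB a s θ ≤ ∫ θ in (0:ℝ)..(π/2), Kfun a s θ := by
    apply intervalIntegral.integral_mono_on (by positivity)
      ((contgB a s hs).intervalIntegrable 0 (π/2))
      ((contKfun a s hs).intervalIntegrable 0 (π/2))
    intro θ hθ
    exact Kfun_ge a s θ ha0.le hs hθ.1 hθ.2
  rw [gB_integral a s (π/2) ha0 hs] at hmono
  have hsum : a * π ≤ Real.sqrt (a^2*(π/2)^2+s) + a*(π/2) := by
    have : a * (π/2) ≤ Real.sqrt (a^2*(π/2)^2+s) := by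
      rw [Real.le_sqrt' (by positivity)]
      nlinarith
    linarith
  have hsq : (2.8:ℝ)^2 ≤ (Real.sqrt (a^2*(π/2)^2+s) + a*(π/2))^2 := by
    have h1 : (2.8:ℝ) ≤ a * π := by nlinarith [pi_lb]
    nlinarith
  have hinv : ((Real.sqrt (a^2*(π/2)^2+s) + a*(π/2))^2)⁻¹ ≤ ((2.8:ℝ)^2)⁻¹ := by
    apply inv_anti₀ (by norm_num) hsq
  have hterm : s^2/(2*a) * ((Real.sqrt (a^2*(π/2)^2+s) + a*(π/2))^2)⁻¹ ≤ s^2/2 := by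
    have h1 : s^2/(2*a) ≤ s^2/1.8 := by
      apply div_le_div_of_nonneg_left (by positivity) (by norm_num) (by linarith)
    have h2 : (0:ℝ) ≤ ((Real.sqrt (a^2*(π/2)^2+s) + a*(π/2))^2)⁻¹ := by positivity
    calc s^2/(2*a) * ((Real.sqrt (a^2*(π/2)^2+s) + a*(π/2))^2)⁻¹
        ≤ s^2/1.8 * ((2.8:ℝ)^2)⁻¹ := by
          apply mul_le_mul h1 hinv h2 (by positivity)
      _ = s^2 / 14.112 := by norm_num; ring
      _ ≤ s^2/2 := by
          apply div_le_div_of_nonneg_left (sq_nonneg s) (by norm_num) (by norm_num)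
  have hfst : s/2 ≤ s/(2*a) := by
    apply div_le_div_of_nonneg_left hs.le (by linarith) (by linarith)
  linarith

lemma K_upper (a s : ℝ) (ha : 0.9 ≤ a) (ha1 : a ≤ 1) (hs : 0 < s) :
    ∫ θ in (0:ℝ)..(π/2), Kfun a s θ ≤ 7/8 * s := by
  have ha0 : (0:ℝ) < a := by linarith
  have hπ := Real.pi_pos
  have hb : (0:ℝ) < 2*a/π := by positivity
  have hmono : ∫ θ in (0:ℝ)..(π/2), Kfun a s θ ≤ ∫ θ in (0:ℝ)..(π/2), gB (2*a/π) s θ := by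
    apply intervalIntegral.integral_mono_on (by positivity)
      ((contKfun a s hs).intervalIntegrable 0 (π/2))
      ((contgB (2*a/π) s hs).intervalIntegrable 0 (π/2))
    intro θ hθ
    exact Kfun_le a s θ ha0.le hs hθ.1 hθ.2
  rw [gB_integral (2*a/π) s (π/2) hb hs] at hmono
  have hterm : (0:ℝ) ≤ s^2/(2*(2*a/π)) * ((Real.sqrt ((2*a/π)^2*(π/2)^2+s) + (2*a/π)*(π/2))^2)⁻¹ := by
    have := DmB_pos (2*a/π) s (π/2) hs
    positivity
  have hmain : s/(2*(2*a/π)) ≤ 7/8 * s := by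
    have he : s/(2*(2*a/π)) = s*π/(4*a) := by
      field_simp; ring
    rw [he, div_le_iff₀ (by positivity)]
    nlinarith [mul_le_mul_of_nonneg_left pi_ub.le hs.le,
      mul_nonneg (sub_nonneg.mpr ha) hs.le]
  linarith
lemma f2_formula (a s δ : ℝ) (ha : 0 ≤ a) (hs : 0 < s) :
    f2 a s δ = 4/δ * ((1-a)^2 + s - ∫ θ in (0:ℝ)..(π/2), Kfun a s θ) := by
  unfold f2
  rw [I2_split a s ha hs]
  ring

lemma f2_lb (a s δ : ℝ) (hδ : 0 < δ) (ha : 0.9 ≤ a) (ha1 : a ≤ 1) (hs : 0 < s) :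
    s/(2*δ) ≤ f2 a s δ := by
  rw [f2_formula a s δ (by linarith) hs]
  have hK := K_upper a s ha ha1 hs
  have h4 : (0:ℝ) < 4/δ := by positivity
  have h5 : s/8 ≤ (1-a)^2 + s - ∫ θ in (0:ℝ)..(π/2), Kfun a s θ := by
    nlinarith [sq_nonneg (1-a)]
  calc s/(2*δ) = 4/δ * (s/8) := by field_simp; ring
    _ ≤ 4/δ * ((1-a)^2 + s - ∫ θ in (0:ℝ)..(π/2), Kfun a s θ) :=
        mul_le_mul_of_nonneg_left h5 h4.le

lemma f2_ub (a s δ : ℝ) (hδ : 0 < δ) (ha : 0.9 ≤ a) (ha1 : a ≤ 1) (hs : 0 < s) :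
    f2 a s δ ≤ 4/δ * ((1-a)^2 + s/2 + s^2/2) := by
  rw [f2_formula a s δ (by linarith) hs]
  have hK := K_lower a s ha ha1 hs
  have h4 : (0:ℝ) < 4/δ := by positivity
  apply mul_le_mul_of_nonneg_left _ h4.le
  linarith

lemma f1_le_one (a s : ℝ) (ha : 0 ≤ a) (hs : 0 < s) : f1 a s ≤ 1 := by
  unfold f1
  rw [← sin_integral_pi_div_two]
  apply intervalIntegral.integral_mono_on (by positivity)
  · apply Continuous.intervalIntegrable
    apply Continuous.div (by continuity) (contD a s)
    intro θ; exact (Dpos a s θ hs).ne'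
  · exact Real.continuous_sin.intervalIntegrable 0 (π/2)
  · intro θ hθ
    have hE := Dpos a s θ hs
    have hsin0 : 0 ≤ Real.sin θ := Real.sin_nonneg_of_nonneg_of_le_pi hθ.1
      (by linarith [hθ.2, Real.pi_pos])
    have hma : a * Real.sin θ ≤ Real.sqrt (a^2*Real.sin θ^2 + s) := by
      rw [Real.le_sqrt (by positivity) (by positivity)]
      nlinarith
    rw [div_le_iff₀ hE]
    nlinarith [mul_le_mul_of_nonneg_left hma hsin0]

lemma f1_nonneg (a s : ℝ) (ha : 0 ≤ a) (hs : 0 < s) : 0 ≤ f1 a s := by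
  unfold f1
  apply intervalIntegral.integral_nonneg (by positivity)
  intro θ hθ
  have hsin0 : 0 ≤ Real.sin θ := Real.sin_nonneg_of_nonneg_of_le_pi hθ.1
    (by linarith [hθ.2, Real.pi_pos])
  have hE := Dpos a s θ hs
  positivity

set_option maxHeartbeats 1000000 in
lemma f1_lower (a s : ℝ) (ha : 0.9 ≤ a) (ha1 : a ≤ 1) (hs : 0 < s) (hs1 : s ≤ 1) :
    1 - f1 a s ≤ 4 * s ^ ((2:ℝ)/3) := by
  have ha0 : (0:ℝ) < a := by linarith
  set θ₀ := s ^ ((1:ℝ)/3) with hθ₀def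
  have hθ₀pos : 0 < θ₀ := Real.rpow_pos_of_pos hs _
  have hθ₀le1 : θ₀ ≤ 1 := Real.rpow_le_one hs.le hs1 (by norm_num)
  have hπ2 : (1:ℝ) < π/2 := by nlinarith [pi_lb]
  have hθ₀ltπ2 : θ₀ ≤ π/2 := by linarith
  have hcont : Continuous fun θ => a * Real.sin θ^2 / Real.sqrt (a^2*Real.sin θ^2 + s) := by
    apply Continuous.div (by continuity) (contD a s)
    intro θ; exact (Dpos a s θ hs).ne'
  have hconth : Continuous fun θ =>
      Real.sin θ - a * Real.sin θ^2 / Real.sqrt (a^2*Real.sin θ^2 + s) :=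
    Real.continuous_sin.sub hcont
  have heq : 1 - f1 a s = ∫ θ in (0:ℝ)..(π/2),
      (Real.sin θ - a * Real.sin θ^2 / Real.sqrt (a^2*Real.sin θ^2 + s)) := by
    unfold f1
    rw [intervalIntegral.integral_sub (Real.continuous_sin.intervalIntegrable 0 (π/2))
      (hcont.intervalIntegrable 0 (π/2)), sin_integral_pi_div_two]
  rw [heq]
  rw [← intervalIntegral.integral_add_adjacent_intervals
    (hconth.intervalIntegrable 0 θ₀) (hconth.intervalIntegrable θ₀ (π/2))]
  have piece1 : ∫ θ in (0:ℝ)..θ₀,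
      (Real.sin θ - a * Real.sin θ^2 / Real.sqrt (a^2*Real.sin θ^2 + s)) ≤ θ₀^2/2 := by
    have : ∫ θ in (0:ℝ)..θ₀, θ = θ₀^2/2 := by
      rw [integral_id]; ring
    rw [← this]
    apply intervalIntegral.integral_mono_on hθ₀pos.le (hconth.intervalIntegrable 0 θ₀)
      (continuous_id.intervalIntegrable 0 θ₀)
    intro θ hθ
    have hsin0 : 0 ≤ Real.sin θ := Real.sin_nonneg_of_nonneg_of_le_pi hθ.1
      (by linarith [hθ.2, Real.pi_pos])
    have hE := Dpos a s θ hs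
    have h1 : Real.sin θ ≤ θ := Real.sin_le hθ.1
    have h2 : 0 ≤ a * Real.sin θ^2 / Real.sqrt (a^2*Real.sin θ^2 + s) := by positivity
    simpa using by linarith
  have piece2 : ∫ θ in θ₀..(π/2),
      (Real.sin θ - a * Real.sin θ^2 / Real.sqrt (a^2*Real.sin θ^2 + s))
        ≤ (π/2) * (s/(a^2 * Real.sin θ₀)) := by
    have hsinθ₀ : 0 < Real.sin θ₀ :=
      Real.sin_pos_of_pos_of_lt_pi hθ₀pos (by nlinarith [Real.pi_pos])
    have hstep : ∫ θ in θ₀..(π/2),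
        (Real.sin θ - a * Real.sin θ^2 / Real.sqrt (a^2*Real.sin θ^2 + s))
          ≤ ∫ _ in θ₀..(π/2), (s/(a^2 * Real.sin θ₀)) := by
      apply intervalIntegral.integral_mono_on hθ₀ltπ2 (hconth.intervalIntegrable θ₀ (π/2))
        (intervalIntegrable_const)
      intro θ hθ
      have hθ0 : 0 ≤ θ := le_trans hθ₀pos.le hθ.1
      have hsinmono : Real.sin θ₀ ≤ Real.sin θ :=
        Real.sin_le_sin_of_le_of_le_pi_div_two (by linarith [Real.pi_pos]) hθ.2 hθ.1
      have hsin0 : 0 < Real.sin θ := lt_of_lt_of_le hsinθ₀ hsinmono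
      have hsin1 : Real.sin θ ≤ 1 := Real.sin_le_one θ
      set E := Real.sqrt (a^2*Real.sin θ^2 + s) with hE
      have hEpos : 0 < E := Dpos a s θ hs
      have hE2 : E^2 = a^2*Real.sin θ^2 + s := Real.sq_sqrt (by positivity)
      have hmE : a * Real.sin θ ≤ E := by
        rw [hE, Real.le_sqrt (by positivity) (by positivity)]
        nlinarith
      have e1 : Real.sin θ - a*Real.sin θ^2/E = Real.sin θ*(E - a*Real.sin θ)/E := by
        field_simp
      rw [e1, div_le_div_iff₀ hEpos (by positivity)]
      have hkey : (E - a*Real.sin θ)*E ≤ s := by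
        nlinarith [mul_nonneg (mul_nonneg ha0.le hsin0.le) (sub_nonneg.mpr hmE)]
      have hsq : a^2*Real.sin θ*Real.sin θ₀ ≤ E^2 := by
        nlinarith [mul_nonneg (mul_nonneg (sq_nonneg a) hsin0.le) (sub_nonneg.mpr hsinmono)]
      have hA := mul_le_mul_of_nonneg_left hsq (sub_nonneg.mpr hmE)
      have hB : ((E - a*Real.sin θ)*E)*E ≤ s*E := mul_le_mul_of_nonneg_right hkey hEpos.le
      nlinarith [hA, hB]
    rw [intervalIntegral.integral_const] at hstep
    have : (π/2 - θ₀) • (s/(a^2 * Real.sin θ₀)) ≤ (π/2) * (s/(a^2 * Real.sin θ₀)) := by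
      rw [smul_eq_mul]
      apply mul_le_mul_of_nonneg_right (by linarith) (by positivity)
    linarith
  have hjordan : 2/π * θ₀ ≤ Real.sin θ₀ := Real.mul_le_sin hθ₀pos.le hθ₀ltπ2
  have hsinθ₀ : 0 < Real.sin θ₀ :=
    Real.sin_pos_of_pos_of_lt_pi hθ₀pos (by nlinarith [Real.pi_pos])
  have hπ := Real.pi_pos
  have hc : (π/2) * (s/(a^2 * Real.sin θ₀)) ≤ 3.5 * (s/θ₀) := by
    have h1 : s/(a^2 * Real.sin θ₀) ≤ s/(a^2 * (2/π * θ₀)) := by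
      apply div_le_div_of_nonneg_left hs.le (by positivity)
      apply mul_le_mul_of_nonneg_left hjordan (by positivity)
    have h2 : (π/2) * (s/(a^2 * (2/π * θ₀))) = π^2/(4*a^2) * (s/θ₀) := by
      field_simp; ring
    have h3 : π^2/(4*a^2) ≤ 3.5 := by
      rw [div_le_iff₀ (by positivity)]
      nlinarith [pi_ub]
    have h4 : (0:ℝ) ≤ s/θ₀ := by positivity
    calc (π/2) * (s/(a^2 * Real.sin θ₀)) ≤ (π/2) * (s/(a^2 * (2/π * θ₀))) :=
          mul_le_mul_of_nonneg_left h1 (by positivity)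
      _ = π^2/(4*a^2) * (s/θ₀) := h2
      _ ≤ 3.5 * (s/θ₀) := mul_le_mul_of_nonneg_right h3 h4
  have e2 : θ₀^2 = s ^ ((2:ℝ)/3) := by
    rw [hθ₀def, ← Real.rpow_natCast (s ^ ((1:ℝ)/3)) 2, ← Real.rpow_mul hs.le]
    norm_num
  have e3 : s/θ₀ = s ^ ((2:ℝ)/3) := by
    rw [hθ₀def, show (2:ℝ)/3 = 1 - 1/3 by norm_num, Real.rpow_sub hs, Real.rpow_one]
  calc _ ≤ θ₀^2/2 + (π/2) * (s/(a^2 * Real.sin θ₀)) := by linarith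
    _ ≤ θ₀^2/2 + 3.5 * (s/θ₀) := by linarith
    _ = 4 * s ^ ((2:ℝ)/3) := by rw [e2, e3]; ring

lemma f1_cube (a s : ℝ) (ha : 0.9 ≤ a) (ha1 : a ≤ 1) (hs : 0 < s) (hs1 : s ≤ 1) :
    (1 - f1 a s)^3 ≤ 64 * s^2 := by
  have h1 := f1_lower a s ha ha1 hs hs1
  have h0 : 0 ≤ 1 - f1 a s := by linarith [f1_le_one a s (by linarith) hs]
  calc (1 - f1 a s)^3 ≤ (4 * s ^ ((2:ℝ)/3))^3 := pow_le_pow_left₀ h0 h1 3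
    _ = 64 * s^2 := by
        rw [mul_pow, ← Real.rpow_natCast (s ^ ((2:ℝ)/3)) 3, ← Real.rpow_mul hs.le]
        norm_num
noncomputable def RS (δ a0 s0 : ℝ) : ℕ → ℝ × ℝ
  | 0 => (a0, s0)
  | t + 1 => (f1 (RS δ a0 s0 t).1 (RS δ a0 s0 t).2,
              f2 (RS δ a0 s0 t).1 (RS δ a0 s0 t).2 δ)

lemma SE_eq_RS (δ a0 s0 : ℝ) (h : ∀ t, 0 ≤ (RS δ a0 s0 t).1) :
    ∀ t, SE δ 0 (a0:ℂ) s0 t = (((RS δ a0 s0 t).1 : ℂ), (RS δ a0 s0 t).2) := by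
  intro t
  induction t with
  | zero => rfl
  | succ t ih =>
    show (psi1 (SE δ 0 (a0:ℂ) s0 t).1 (SE δ 0 (a0:ℂ) s0 t).2,
          psi2 (SE δ 0 (a0:ℂ) s0 t).1 (SE δ 0 (a0:ℂ) s0 t).2 δ 0) = _
    rw [ih]
    have h1 := psi1_eq (RS δ a0 s0 t).1 (RS δ a0 s0 t).2 (h t)
    have h2 := psi2_eq (RS δ a0 s0 t).1 (RS δ a0 s0 t).2 δ (h t)
    simp only [h1, h2]
    rfl

lemma inv_to_sq (x s η : ℝ) (hx : 0 ≤ x) (hs : 0 < s) (hη : 0 < η)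
    (h24 : x^24 ≤ s^15) (hsη : s ≤ η^4) : x^2 ≤ η*s := by
  have h1 : s^3 ≤ η^12 := by
    calc s^3 ≤ (η^4)^3 := pow_le_pow_left₀ hs.le hsη 3
      _ = η^12 := by ring
  have h2 : (x^2)^12 ≤ (η*s)^12 := by
    calc (x^2)^12 = x^24 := by ring
      _ ≤ s^15 := h24
      _ = s^12 * s^3 := by ring
      _ ≤ s^12 * η^12 := by
          apply mul_le_mul_of_nonneg_left h1 (by positivity)
      _ = (η*s)^12 := by ring
  exact (pow_le_pow_iff_left₀ (sq_nonneg x) (by positivity) (by norm_num)).mp h2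

lemma contract (δ s x : ℝ) (hδ : 2 < δ) (hx2 : x^2 ≤ (δ-2)/16 * s)
    (hs : 0 < s) (hsd : s ≤ (δ-2)/8) :
    4/δ*(x^2 + s/2 + s^2/2) ≤ (δ+2)/(2*δ) * s := by
  have hδ0 : (0:ℝ) < δ := by linarith
  have key : 4*(x^2 + s/2 + s^2/2) ≤ (δ+2)*s/2 := by nlinarith
  have e1 : 4/δ*(x^2 + s/2 + s^2/2) = (4*(x^2 + s/2 + s^2/2))/δ := by ring
  have e2 : (δ+2)/(2*δ) * s = ((δ+2)*s/2)/δ := by field_simp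
  rw [e1, e2]
  exact div_le_div_of_nonneg_right key hδ0.le
lemma step_all (δ a s : ℝ) (hδ : 2 < δ) (ha : 0.9 ≤ a) (ha1 : a ≤ 1) (hs : 0 < s)
    (hs1000 : s ≤ 1/1000) (hsbig : s ≤ 1/(64^8*(2*δ)^15)) :
    0.9 ≤ f1 a s ∧ f1 a s ≤ 1 ∧ s/(2*δ) ≤ f2 a s δ ∧
      (1 - f1 a s)^24 ≤ (f2 a s δ)^15 := by
  have hδ0 : (0:ℝ) < δ := by linarith
  have hs1 : s ≤ 1 := by linarith
  have hC2 := f1_le_one a s (by linarith) hs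
  have hcube := f1_cube a s ha ha1 hs hs1
  have h0 : 0 ≤ 1 - f1 a s := by linarith
  have hC1 : 0.9 ≤ f1 a s := by
    have h3 : (1 - f1 a s)^3 ≤ (1/10:ℝ)^3 := by nlinarith
    have := (pow_le_pow_iff_left₀ h0 (by norm_num : (0:ℝ) ≤ 1/10) (by norm_num : 3 ≠ 0)).mp h3
    linarith
  have hC3 := f2_lb a s δ hδ0 ha ha1 hs
  have h2δ : (0:ℝ) < (2*δ)^15 := by positivity
  have hC4 : (1 - f1 a s)^24 ≤ (f2 a s δ)^15 := by
    have e1 : (1 - f1 a s)^24 = ((1 - f1 a s)^3)^8 := by ring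
    have h1 : ((1 - f1 a s)^3)^8 ≤ (64*s^2)^8 := pow_le_pow_left₀ (by positivity) hcube 8
    have h2 : (64*s^2:ℝ)^8 = 64^8 * s^15 * s := by ring
    have h3 : 64^8 * s ≤ 1/(2*δ)^15 := by
      rw [le_div_iff₀ h2δ]
      calc 64^8 * s * (2*δ)^15 = s * (64^8*(2*δ)^15) := by ring
        _ ≤ (1/(64^8*(2*δ)^15)) * (64^8*(2*δ)^15) := by
            apply mul_le_mul_of_nonneg_right hsbig (by positivity)
        _ = 1 := by field_simp
    have h4 : 64^8 * s^15 * s ≤ s^15 * (1/(2*δ)^15) := by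
      calc 64^8 * s^15 * s = s^15 * (64^8 * s) := by ring
        _ ≤ s^15 * (1/(2*δ)^15) := mul_le_mul_of_nonneg_left h3 (by positivity)
    have h5 : s^15 * (1/(2*δ)^15) = (s/(2*δ))^15 := by
      rw [div_pow]; ring
    have h6 : (s/(2*δ))^15 ≤ (f2 a s δ)^15 := pow_le_pow_left₀ (by positivity) hC3 15
    calc (1 - f1 a s)^24 = ((1 - f1 a s)^3)^8 := e1
      _ ≤ (64*s^2)^8 := h1
      _ = 64^8 * s^15 * s := h2
      _ ≤ s^15 * (1/(2*δ)^15) := h4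
      _ = (s/(2*δ))^15 := h5
      _ ≤ (f2 a s δ)^15 := h6
  exact ⟨hC1, hC2, hC3, hC4⟩
set_option maxHeartbeats 1000000 in
/-- Theorem (local convergence of SE, noiseless): if `δ > 2`, there exist `ε₁, ε₂ > 0`
such that the SE converges to `(1, 0)` for any real `α₀ ∈ (1−ε₁, 1)` and `σ₀² ∈ (0, ε₂)`. -/
theorem SE_local_convergence_of_delta_gt_two (δ : ℝ) (hδ : δ > 2) :
    ∃ ε1 > (0:ℝ), ∃ ε2 > (0:ℝ),
      ∀ α0 : ℝ, 1 - ε1 < α0 → α0 < 1 →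
      ∀ s0 : ℝ, 0 < s0 → s0 < ε2 →
        Tendsto (fun t => (SE δ 0 (α0 : ℂ) s0 t).1) atTop (𝓝 1) ∧
        Tendsto (fun t => (SE δ 0 (α0 : ℂ) s0 t).2) atTop (𝓝 0) := by
  have hδ0 : (0:ℝ) < δ := by linarith
  have hηpos : (0:ℝ) < (δ-2)/16 := div_pos (by linarith) (by norm_num)
  obtain ⟨ρ, hρ0, hρ1, hρge⟩ : ∃ r : ℝ, 0 ≤ r ∧ r < 1 ∧ (δ+2)/(2*δ) ≤ r := by
    refine ⟨(δ+2)/(2*δ), by positivity, ?_, le_refl _⟩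
    rw [div_lt_one (by positivity)]; linarith
  obtain ⟨ε, hεpos, hε1000, hεη, hεδ, hεbig⟩ :
      ∃ e : ℝ, 0 < e ∧ e ≤ 1/1000 ∧ e ≤ ((δ-2)/16)^4 ∧ e ≤ (δ-2)/8 ∧
        e ≤ 1/(64^8*(2*δ)^15) := by
    have h2δpow : (0:ℝ) < (2*δ)^15 := pow_pos (by linarith) 15
    refine ⟨min (min (1/1000) (((δ-2)/16)^4)) (min ((δ-2)/8) (1/(64^8*(2*δ)^15))), ?_, ?_, ?_, ?_, ?_⟩
    · exact lt_min (lt_min (by norm_num) (pow_pos hηpos 4))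
        (lt_min (div_pos (by linarith) (by norm_num))
          (one_div_pos.mpr (mul_pos (by positivity) h2δpow)))
    · exact le_trans (min_le_left _ _) (min_le_left _ _)
    · exact le_trans (min_le_left _ _) (min_le_right _ _)
    · exact le_trans (min_le_right _ _) (min_le_left _ _)
    · exact le_trans (min_le_right _ _) (min_le_right _ _)
  obtain ⟨ε1, hε1pos, hε1_10, hε1sq⟩ :
      ∃ e : ℝ, 0 < e ∧ e ≤ 1/10 ∧ e^2 ≤ δ*ε/16 := by
    refine ⟨min (1/10) (Real.sqrt (δ*ε/16)), ?_, min_le_left _ _, ?_⟩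
    · exact lt_min (by norm_num) (Real.sqrt_pos.mpr (by positivity))
    · have h1 : min (1/10) (Real.sqrt (δ*ε/16)) ≤ Real.sqrt (δ*ε/16) := min_le_right _ _
      have h2 : (0:ℝ) ≤ min (1/10) (Real.sqrt (δ*ε/16)) :=
        le_min (by norm_num) (Real.sqrt_nonneg _)
      calc (min (1/10) (Real.sqrt (δ*ε/16)))^2 ≤ (Real.sqrt (δ*ε/16))^2 :=
            pow_le_pow_left₀ h2 h1 2
        _ = δ*ε/16 := Real.sq_sqrt (by positivity)
  obtain ⟨ε2, hε2pos, hε2ε, hε2δ⟩ :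
      ∃ e : ℝ, 0 < e ∧ e ≤ ε ∧ e ≤ δ*ε/16 := by
    exact ⟨min ε (δ*ε/16), lt_min hεpos (by positivity), min_le_left _ _, min_le_right _ _⟩
  refine ⟨ε1, hε1pos, ε2, hε2pos, ?_⟩
  intro α0 hα0l hα0u s0 hs0 hs0u
  have hα09 : 0.9 ≤ α0 := by linarith
  have hα01 : α0 ≤ 1 := hα0u.le
  have hα0sq : (1-α0)^2 ≤ δ*ε/16 := by
    have h2 : 0 ≤ 1 - α0 := by linarith
    calc (1-α0)^2 ≤ ε1^2 := pow_le_pow_left₀ h2 (by linarith) 2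
      _ ≤ δ*ε/16 := hε1sq
  have hs0ε : s0 ≤ ε := by linarith
  have hs0δ : s0 ≤ δ*ε/16 := by linarith
  set A : ℕ → ℝ := fun t => (RS δ α0 s0 t).1 with hA
  set S : ℕ → ℝ := fun t => (RS δ α0 s0 t).2 with hS
  have hA0 : A 0 = α0 := rfl
  have hS0 : S 0 = s0 := rfl
  have hAS1 : ∀ t, A (t+1) = f1 (A t) (S t) := fun t => rfl
  have hAS2 : ∀ t, S (t+1) = f2 (A t) (S t) δ := fun t => rfl
  have main : ∀ t, (0.9 ≤ A t ∧ A t ≤ 1 ∧ 0 < S t ∧ S t ≤ ε) ∧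
      (1 ≤ t → (1 - A t)^24 ≤ (S t)^15) := by
    intro t
    induction t with
    | zero => exact ⟨⟨hα09, hα01, hs0, hs0ε⟩, fun h => (Nat.not_succ_le_zero 0 h).elim⟩
    | succ t ih =>
      obtain ⟨⟨h1, h2, h3, h4⟩, h5⟩ := ih
      have hs1000 : S t ≤ 1/1000 := le_trans h4 hε1000
      have hsbig : S t ≤ 1/(64^8*(2*δ)^15) := le_trans h4 hεbig
      obtain ⟨C1, C2, C3, C4⟩ := step_all δ (A t) (S t) hδ h1 h2 h3 hs1000 hsbig
      have hSpos : 0 < S (t+1) := by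
        rw [hAS2 t]; exact lt_of_lt_of_le (by positivity) C3
      have hSle : S (t+1) ≤ ε := by
        rcases Nat.eq_zero_or_pos t with ht0 | ht1
        · subst ht0
          have hub := f2_ub α0 s0 δ hδ0 hα09 hα01 hs0
          have hs' : s0/2 + s0^2/2 ≤ s0 := by nlinarith
          have hch : f2 α0 s0 δ ≤ 4/δ*(δ*ε/16 + δ*ε/16) := by
            calc f2 α0 s0 δ ≤ 4/δ*((1-α0)^2 + s0/2 + s0^2/2) := hub
              _ ≤ 4/δ*(δ*ε/16 + δ*ε/16) := by
                  apply mul_le_mul_of_nonneg_left (by linarith) (by positivity)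
          have he : 4/δ*(δ*ε/16 + δ*ε/16) = ε/2 := by field_simp; ring
          rw [hAS2 0, hA0, hS0]
          linarith
        · have h24 := h5 ht1
          have hx2 : (1 - A t)^2 ≤ (δ-2)/16 * S t :=
            inv_to_sq _ _ _ (by linarith) h3 hηpos h24 (le_trans h4 hεη)
          have hub := f2_ub (A t) (S t) δ hδ0 h1 h2 h3
          have hcon := contract δ (S t) (1 - A t) hδ hx2 h3 (le_trans h4 hεδ)
          have hstep : S (t+1) ≤ ρ * S t := by
            rw [hAS2 t]
            exact le_trans (le_trans hub hcon) (mul_le_mul_of_nonneg_right hρge h3.le)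
          nlinarith
      refine ⟨⟨?_, ?_, hSpos, hSle⟩, fun _ => ?_⟩
      · rw [hAS1 t]; exact C1
      · rw [hAS1 t]; exact C2
      · rw [hAS1 t, hAS2 t]; exact C4
  have hcontr : ∀ t, 1 ≤ t → S (t+1) ≤ ρ * S t := by
    intro t ht
    obtain ⟨⟨h1, h2, h3, h4⟩, h5⟩ := main t
    have h24 := h5 ht
    have hx2 : (1 - A t)^2 ≤ (δ-2)/16 * S t :=
      inv_to_sq _ _ _ (by linarith) h3 hηpos h24 (le_trans h4 hεη)
    have hub := f2_ub (A t) (S t) δ hδ0 h1 h2 h3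
    have hcon := contract δ (S t) (1 - A t) hδ hx2 h3 (le_trans h4 hεδ)
    rw [hAS2 t]
    exact le_trans (le_trans hub hcon) (mul_le_mul_of_nonneg_right hρge h3.le)
  have hgeo : ∀ t, S (t+1) ≤ ρ^t * S 1 := by
    intro t
    induction t with
    | zero => simp
    | succ t ih =>
      calc S (t+2) ≤ ρ * S (t+1) := hcontr (t+1) (by omega)
        _ ≤ ρ * (ρ^t * S 1) := mul_le_mul_of_nonneg_left ih hρ0
        _ = ρ^(t+1) * S 1 := by ring
  have hgeo0 : Tendsto (fun t => ρ^t * S 1) atTop (𝓝 0) := by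
    simpa using (tendsto_pow_atTop_nhds_zero_of_lt_one hρ0 hρ1).mul_const (S 1)
  have hStend : Tendsto S atTop (𝓝 0) := by
    have hshift : Tendsto (fun t => S (t+1)) atTop (𝓝 0) :=
      squeeze_zero (fun t => (main (t+1)).1.2.2.1.le) hgeo hgeo0
    exact (tendsto_add_atTop_iff_nat 1).mp hshift
  have hsqrtS : Tendsto (fun t => Real.sqrt (S t)) atTop (𝓝 0) := by
    have := (Real.continuous_sqrt.tendsto 0).comp hStend
    simpa [Function.comp_def] using this
  have hAtend : Tendsto A atTop (𝓝 1) := by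
    have hb : ∀ t, 1 ≤ t → ‖A t - 1‖ ≤ Real.sqrt (S t) := by
      intro t ht
      obtain ⟨⟨h1, h2, h3, h4⟩, h5⟩ := main t
      have h24 := h5 ht
      have hSle1 : S t ≤ 1 := le_trans h4 (by linarith)
      have h15 : (S t)^15 ≤ (S t)^12 := pow_le_pow_of_le_one h3.le hSle1 (by norm_num)
      have e : (Real.sqrt (S t))^24 = (S t)^12 := by
        rw [show 24 = 2*12 by norm_num, pow_mul, Real.sq_sqrt h3.le]
      have hsq : (1 - A t)^24 ≤ (Real.sqrt (S t))^24 := by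
        rw [e]; exact le_trans h24 h15
      have hfin := (pow_le_pow_iff_left₀ (by linarith : (0:ℝ) ≤ 1 - A t)
        (Real.sqrt_nonneg _) (by norm_num : 24 ≠ 0)).mp hsq
      rw [Real.norm_eq_abs, abs_of_nonpos (by linarith)]
      linarith
    have hzero : Tendsto (fun t => A t - 1) atTop (𝓝 0) := by
      apply squeeze_zero_norm' _ hsqrtS
      filter_upwards [eventually_ge_atTop 1] with t ht using hb t ht
    have := hzero.add_const 1
    simpa using this
  have hApos : ∀ t, 0 ≤ (RS δ α0 s0 t).1 := fun t => by
    have := (main t).1.1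
    rw [hA] at this
    linarith [this]
  have hSE := SE_eq_RS δ α0 s0 hApos
  constructor
  · have h1 : Tendsto (fun t => ((A t : ℝ):ℂ)) atTop (𝓝 ((1:ℝ):ℂ)) :=
      (Complex.continuous_ofReal.tendsto _).comp hAtend
    have h2 : Tendsto (fun t => ((A t : ℝ):ℂ)) atTop (𝓝 1) := by simpa using h1
    apply h2.congr
    intro t
    rw [hSE t]
  · apply hStend.congr
    intro t
    rw [hSE t]
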